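/- (Proposition 2(ii), BIMA part.) Assume (1/n) M̃_nᵀ M̃_n converges in probability to H + σ_M² I, (1/n) M̃_nᵀ U_n converges in probability to h⁰, and the deterministic matrices satisfy (1/n) D_n → 0. Then H + σ_M² I is invertible, and the conditional bias of the BIMA estimator, B_n = (M̃_nᵀM̃_n + D_n)⁻¹ (M̃_nᵀ U_n − D_n θ⁰), converges in probability to (H + σ_M² I)⁻¹ h⁰. -/

import Mathlib

open MeasureTheory Matrix Filter Topology

private lemma matrix_smul_inv {L : ℕ} (c : ℝ) (hc : c ≠ 0)
    (A : Matrix (Fin L) (Fin L) ℝ) : (c • A)⁻¹ = c⁻¹ • A⁻¹ := by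
  by_cases h : IsUnit A.det
  · have : Invertible c := invertibleOfNonzero hc
    rw [_root_.Matrix.inv_smul (A := A) c h, invOf_eq_right_inv (mul_inv_cancel₀ hc)]
  · have h2 : ¬ IsUnit (c • A).det := by
      rw [Matrix.det_smul, isUnit_iff_ne_zero]
      intro hu
      exact h (isUnit_iff_ne_zero.mpr (right_ne_zero_of_mul hu))
    rw [Matrix.nonsing_inv_apply_not_isUnit _ h2,
      Matrix.nonsing_inv_apply_not_isUnit _ h, smul_zero]

set_option maxHeartbeats 1000000 in
/-- **Proposition 2(ii), BIMA part.**
If `(1/n) M̃ₙᵀM̃ₙ → H + σ_M² I` in probability (entrywise), `(1/n) M̃ₙᵀUₙ → h⁰` in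
probability, and the deterministic matrices satisfy `(1/n) Dₙ → 0`, then `H + σ_M² I`
is invertible and the conditional bias of the BIMA estimator,
`Bₙ = (M̃ₙᵀM̃ₙ + Dₙ)⁻¹ (M̃ₙᵀUₙ − Dₙθ⁰)`, converges in probability to
`(H + σ_M² I)⁻¹ h⁰`. -/
theorem bima_asymptotic_bias
    {Ω : Type*} [MeasurableSpace Ω] (P : Measure Ω) [IsProbabilityMeasure P]
    {L : ℕ} (σM : ℝ) (hσM : 0 < σM)
    (H : Matrix (Fin L) (Fin L) ℝ) (hH : H.PosSemidef)
    (h0 : Fin L → ℝ) (θ0 : Fin L → ℝ)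
    (M : (n : ℕ) → Ω → Matrix (Fin n) (Fin L) ℝ)
    (U : (n : ℕ) → Ω → Fin n → ℝ)
    (D : ℕ → Matrix (Fin L) (Fin L) ℝ) (hD : ∀ n, (D n).PosSemidef)
    (hMM : ∀ l l' : Fin L, TendstoInMeasure P
      (fun (n : ℕ) (ω : Ω) => (n : ℝ)⁻¹ * (((M n ω)ᵀ * M n ω) l l')) atTop
      (fun _ => (H + σM ^ 2 • (1 : Matrix (Fin L) (Fin L) ℝ)) l l'))
    (hMU : ∀ l : Fin L, TendstoInMeasure P
      (fun (n : ℕ) (ω : Ω) => (n : ℝ)⁻¹ * (((M n ω)ᵀ *ᵥ U n ω) l)) atTop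
      (fun _ => h0 l))
    (hDlim : Tendsto (fun n : ℕ => ((n : ℝ)⁻¹) • D n) atTop (nhds 0)) :
    IsUnit (H + σM ^ 2 • (1 : Matrix (Fin L) (Fin L) ℝ)) ∧
      TendstoInMeasure P
        (fun (n : ℕ) (ω : Ω) =>
          ((M n ω)ᵀ * M n ω + D n)⁻¹ *ᵥ ((M n ω)ᵀ *ᵥ U n ω - (D n) *ᵥ θ0)) atTop
        (fun _ => (H + σM ^ 2 • (1 : Matrix (Fin L) (Fin L) ℝ))⁻¹ *ᵥ h0) := by
  classical
  have hGpd : (H + σM ^ 2 • (1 : Matrix (Fin L) (Fin L) ℝ)).PosDef := by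
    refine Matrix.PosDef.posSemidef_add hH ?_
    rw [Matrix.smul_one_eq_diagonal]
    exact Matrix.PosDef.diagonal fun _ => by positivity
  set G : Matrix (Fin L) (Fin L) ℝ := H + σM ^ 2 • (1 : Matrix (Fin L) (Fin L) ℝ) with hGdef
  have hdet : G.det ≠ 0 := hGpd.det_pos.ne'
  refine ⟨(Matrix.isUnit_iff_isUnit_det G).mpr (isUnit_iff_ne_zero.mpr hdet), ?_⟩
  -- continuity of `(A, b) ↦ A⁻¹ *ᵥ b` at `(G, h0)`
  have hFcont : ContinuousAt
      (fun p : (Fin L → Fin L → ℝ) × (Fin L → ℝ) => (Matrix.of p.1)⁻¹ *ᵥ p.2) (G, h0) := by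
    have hinv : ContinuousAt Inv.inv G := by
      apply continuousAt_matrix_inv
      rw [Ring.inverse_eq_inv']
      exact continuousAt_inv₀ hdet
    have h2 : Continuous (fun q : Matrix (Fin L) (Fin L) ℝ × (Fin L → ℝ) => q.1 *ᵥ q.2) :=
      continuous_fst.matrix_mulVec continuous_snd
    have h1 : ContinuousAt (fun p : Matrix (Fin L) (Fin L) ℝ × (Fin L → ℝ) => (p.1⁻¹, p.2))
        (G, h0) := (hinv.comp continuousAt_fst).prodMk continuousAt_snd
    exact (h2.continuousAt).comp h1
  rw [tendstoInMeasure_iff_dist]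
  intro ε hε
  obtain ⟨δ, hδpos, hδ⟩ := Metric.continuousAt_iff.mp hFcont ε hε
  have hhalf : 0 < δ / 2 := by positivity
  -- deterministic smallness, entrywise and for the `mulVec`
  have hDentry : ∀ l l' : Fin L, Tendsto (fun n : ℕ => ((n : ℝ)⁻¹ • D n) l l') atTop (𝓝 0) := by
    intro l l'
    have hc : Continuous fun A : Matrix (Fin L) (Fin L) ℝ => A l l' :=
      continuous_id.matrix_elem l l'
    simpa [Function.comp_def] using (hc.tendsto 0).comp hDlim
  have hDθ : Tendsto (fun n : ℕ => ((n : ℝ)⁻¹ • D n) *ᵥ θ0) atTop (𝓝 0) := by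
    have hc : Continuous fun A : Matrix (Fin L) (Fin L) ℝ => A *ᵥ θ0 :=
      continuous_id.matrix_mulVec continuous_const
    simpa [Function.comp_def] using (hc.tendsto 0).comp hDlim
  have hsmall : ∀ᶠ n : ℕ in atTop,
      (∀ l l' : Fin L, |((n : ℝ)⁻¹ • D n) l l'| < δ / 2) ∧
        dist (((n : ℝ)⁻¹ • D n) *ᵥ θ0) 0 < δ / 2 ∧ 1 ≤ n := by
    refine (eventually_all.mpr fun l => eventually_all.mpr fun l' => ?_).and
      ((Metric.tendsto_nhds.mp hDθ _ hhalf).and (eventually_ge_atTop 1))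
    have := Metric.tendsto_nhds.mp (hDentry l l') _ hhalf
    simpa [Real.dist_eq, abs_mul, abs_inv, Nat.abs_cast] using this
  -- the "bad" sets coming from the stochastic hypotheses
  set T : ℕ → Fin L × Fin L → Set Ω := fun n p =>
    {ω | δ / 2 ≤ dist ((n : ℝ)⁻¹ * (((M n ω)ᵀ * M n ω) p.1 p.2)) (G p.1 p.2)} with hT
  set V : ℕ → Fin L → Set Ω := fun n l =>
    {ω | δ / 2 ≤ dist ((n : ℝ)⁻¹ * (((M n ω)ᵀ *ᵥ U n ω) l)) (h0 l)} with hV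
  have hbound : ∀ᶠ n : ℕ in atTop,
      P {ω | ε ≤ dist (((M n ω)ᵀ * M n ω + D n)⁻¹ *ᵥ
          ((M n ω)ᵀ *ᵥ U n ω - (D n) *ᵥ θ0)) (G⁻¹ *ᵥ h0)} ≤
        (∑ p : Fin L × Fin L, P (T n p)) + ∑ l : Fin L, P (V n l) := by
    filter_upwards [hsmall] with n hn
    obtain ⟨hn1, hn2, hn3⟩ := hn
    have hnne : ((n : ℝ))⁻¹ ≠ 0 := by
      have : (0 : ℝ) < (n : ℝ) := by exact_mod_cast hn3
      positivity
    have hsub : {ω | ε ≤ dist (((M n ω)ᵀ * M n ω + D n)⁻¹ *ᵥ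
          ((M n ω)ᵀ *ᵥ U n ω - (D n) *ᵥ θ0)) (G⁻¹ *ᵥ h0)} ⊆
        (⋃ p : Fin L × Fin L, T n p) ∪ ⋃ l : Fin L, V n l := by
      intro ω hω
      by_contra hmem
      simp only [Set.mem_union, Set.mem_iUnion, not_or, not_exists, hT, hV,
        Set.mem_setOf_eq, not_le] at hmem
      obtain ⟨hmm, hmu⟩ := hmem
      -- the rescaled quantities
      set A1 : Fin L → Fin L → ℝ :=
        fun l l' => (n : ℝ)⁻¹ * (((M n ω)ᵀ * M n ω + D n) l l') with hA1
      set b1 : Fin L → ℝ :=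
        fun l => (n : ℝ)⁻¹ * (((M n ω)ᵀ *ᵥ U n ω - (D n) *ᵥ θ0) l) with hb1
      have hA1eq : Matrix.of A1 = (n : ℝ)⁻¹ • ((M n ω)ᵀ * M n ω + D n) := by
        ext l l'
        simp [hA1, Matrix.smul_apply]
      have hb1eq : b1 = (n : ℝ)⁻¹ • ((M n ω)ᵀ *ᵥ U n ω - (D n) *ᵥ θ0) := by
        ext l
        simp [hb1]
      -- the estimator is the rescaled estimator
      have hrew : (Matrix.of A1)⁻¹ *ᵥ b1 =
          ((M n ω)ᵀ * M n ω + D n)⁻¹ *ᵥ ((M n ω)ᵀ *ᵥ U n ω - (D n) *ᵥ θ0) := by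
        have hn0 : ((n : ℝ)) ≠ 0 := fun h => hnne (by rw [h]; exact _root_.inv_zero)
        rw [hA1eq, hb1eq, matrix_smul_inv _ hnne, inv_inv, Matrix.smul_mulVec,
          Matrix.mulVec_smul, smul_smul, mul_inv_cancel₀ hn0, one_smul]
      -- closeness of the pair
      have hclose : dist ((A1, b1) : (Fin L → Fin L → ℝ) × (Fin L → ℝ))
          ((G, h0) : (Fin L → Fin L → ℝ) × (Fin L → ℝ)) < δ := by
        rw [Prod.dist_eq]
        refine max_lt ?_ ?_
        · rw [dist_pi_lt_iff hδpos]
          intro l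
          rw [dist_pi_lt_iff hδpos]
          intro l'
          have hsplit : A1 l l' =
              (n : ℝ)⁻¹ * (((M n ω)ᵀ * M n ω) l l') + ((n : ℝ)⁻¹ • D n) l l' := by
            simp [hA1, Matrix.add_apply, Matrix.smul_apply, mul_add, smul_eq_mul]
          calc dist (A1 l l') (G l l')
              ≤ dist ((n : ℝ)⁻¹ * (((M n ω)ᵀ * M n ω) l l')) (G l l')
                  + |((n : ℝ)⁻¹ • D n) l l'| := by
                rw [hsplit]
                have := dist_triangle ((n : ℝ)⁻¹ * (((M n ω)ᵀ * M n ω) l l')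
                    + ((n : ℝ)⁻¹ • D n) l l')
                  ((n : ℝ)⁻¹ * (((M n ω)ᵀ * M n ω) l l')) (G l l')
                have h4 : dist ((n : ℝ)⁻¹ * (((M n ω)ᵀ * M n ω) l l')
                    + ((n : ℝ)⁻¹ • D n) l l')
                    ((n : ℝ)⁻¹ * (((M n ω)ᵀ * M n ω) l l')) = |((n : ℝ)⁻¹ • D n) l l'| := by
                  rw [Real.dist_eq]; ring_nf
                linarith [this, h4.le]
            _ < δ / 2 + δ / 2 := add_lt_add (hmm (l, l')) (hn1 l l')
            _ = δ := by ring
        · rw [dist_pi_lt_iff hδpos]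
          intro l
          have hsplit : b1 l =
              (n : ℝ)⁻¹ * (((M n ω)ᵀ *ᵥ U n ω) l) - (((n : ℝ)⁻¹ • D n) *ᵥ θ0) l := by
            simp [hb1, Pi.sub_apply, Matrix.smul_mulVec, mul_sub, smul_eq_mul]
          calc dist (b1 l) (h0 l)
              ≤ dist ((n : ℝ)⁻¹ * (((M n ω)ᵀ *ᵥ U n ω) l)) (h0 l)
                  + |(((n : ℝ)⁻¹ • D n) *ᵥ θ0) l| := by
                rw [hsplit]
                have := dist_triangle ((n : ℝ)⁻¹ * (((M n ω)ᵀ *ᵥ U n ω) l)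
                    - (((n : ℝ)⁻¹ • D n) *ᵥ θ0) l)
                  ((n : ℝ)⁻¹ * (((M n ω)ᵀ *ᵥ U n ω) l)) (h0 l)
                have h4 : dist ((n : ℝ)⁻¹ * (((M n ω)ᵀ *ᵥ U n ω) l)
                    - (((n : ℝ)⁻¹ • D n) *ᵥ θ0) l)
                    ((n : ℝ)⁻¹ * (((M n ω)ᵀ *ᵥ U n ω) l)) = |(((n : ℝ)⁻¹ • D n) *ᵥ θ0) l| := by
                  rw [Real.dist_eq]; ring_nf; exact abs_neg _
                linarith [this, h4.le]
            _ < δ / 2 + δ / 2 := by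
                refine add_lt_add (hmu l) ?_
                calc |(((n : ℝ)⁻¹ • D n) *ᵥ θ0) l|
                    = dist ((((n : ℝ)⁻¹ • D n) *ᵥ θ0) l) ((0 : Fin L → ℝ) l) := by
                      simp [Real.dist_eq]
                  _ ≤ dist (((n : ℝ)⁻¹ • D n) *ᵥ θ0) (0 : Fin L → ℝ) := dist_le_pi_dist _ _ l
                  _ < δ / 2 := hn2
            _ = δ := by ring
      have := hδ hclose
      rw [hrew] at this
      simp only [Set.mem_setOf_eq] at hω
      have hGof : (Matrix.of (G : Fin L → Fin L → ℝ))⁻¹ *ᵥ h0 = G⁻¹ *ᵥ h0 := rfl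
      rw [hGof] at this
      exact absurd hω (not_le.mpr this)
    calc P {ω | ε ≤ dist (((M n ω)ᵀ * M n ω + D n)⁻¹ *ᵥ
            ((M n ω)ᵀ *ᵥ U n ω - (D n) *ᵥ θ0)) (G⁻¹ *ᵥ h0)}
        ≤ P ((⋃ p : Fin L × Fin L, T n p) ∪ ⋃ l : Fin L, V n l) := measure_mono hsub
      _ ≤ P (⋃ p : Fin L × Fin L, T n p) + P (⋃ l : Fin L, V n l) := measure_union_le _ _
      _ ≤ (∑ p : Fin L × Fin L, P (T n p)) + ∑ l : Fin L, P (V n l) := by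
          refine add_le_add ?_ ?_
          · exact (measure_iUnion_le _).trans_eq (tsum_fintype _)
          · exact (measure_iUnion_le _).trans_eq (tsum_fintype _)
  -- the upper bound tends to zero
  have hlim : Tendsto (fun n : ℕ =>
      (∑ p : Fin L × Fin L, P (T n p)) + ∑ l : Fin L, P (V n l)) atTop (𝓝 0) := by
    have h1 : Tendsto (fun n : ℕ => ∑ p : Fin L × Fin L, P (T n p)) atTop (𝓝 0) := by
      have := tendsto_finset_sum (Finset.univ : Finset (Fin L × Fin L))
        (fun p _ => tendstoInMeasure_iff_dist.mp (hMM p.1 p.2) (δ / 2) hhalf)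
      simpa using this
    have h2 : Tendsto (fun n : ℕ => ∑ l : Fin L, P (V n l)) atTop (𝓝 0) := by
      have := tendsto_finset_sum (Finset.univ : Finset (Fin L))
        (fun l _ => tendstoInMeasure_iff_dist.mp (hMU l) (δ / 2) hhalf)
      simpa using this
    simpa using h1.add h2
  exact tendsto_of_tendsto_of_tendsto_of_le_of_le' tendsto_const_nhds hlim
    (Eventually.of_forall fun n => zero_le) hbound
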